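/- arXiv:1708.04213 — 2 statements merged into one kernel-verified Lean document; each statement's English description precedes it below -/
import Mathlib

section
/- Let p ≥ 7 be a prime. The coefficients of ₂F₁(1/5, 1/3; 1/2; z) are p-adically unbounded if and only if p ≡ 2, 8 or 14 (mod 15); moreover, if p ≥ 7 and p is not congruent to 2, 8 or 14 modulo 15, then every coefficient A_m of ₂F₁(1/5, 1/3; 1/2; z) satisfies v_p(A_m) ≥ 0. -/
open scoped BigOperators

/-- The `m`-th coefficient `A_m = (a)_m (b)_m / ((c)_m · m!)` of the Gauss
hypergeometric series `₂F₁(a,b;c;z)`. -/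
noncomputable def hypCoeff (a b c : ℚ) (m : ℕ) : ℚ :=
  ((ascPochhammer ℚ m).eval a * (ascPochhammer ℚ m).eval b) /
    ((ascPochhammer ℚ m).eval c * (m.factorial : ℚ))

/-- `₂F₁(a,b;c;z)` has `p`-adically unbounded coefficients. -/
def UnboundedAt (p : ℕ) (a b c : ℚ) : Prop :=
  ∀ N : ℕ, ∃ m : ℕ, padicValRat p (hypCoeff a b c m) < -(N : ℤ)

/-- `(a,b;c)` are admissible hypergeometric parameters. -/
def Admissible (a b c : ℚ) : Prop :=
  0 < a ∧ a < 1 ∧ 0 < b ∧ b < 1 ∧ 0 < c ∧ c < 1 ∧ a ≠ c ∧ b ≠ c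

/-- `τ : ℕ → ℤ` is the family of truncations of the rational number `x`
(with `v_p(x) ≥ 0`): `τ j` is the unique integer with `0 ≤ τ j < p^j` and
`v_p(x - τ j) ≥ j` (the latter interpreted as `x = τ j` or `j ≤ v_p(x - τ j)`). -/
def IsTrunc (p : ℕ) (x : ℚ) (τ : ℕ → ℤ) : Prop :=
  ∀ j : ℕ, 0 ≤ τ j ∧ τ j < (p : ℤ) ^ j ∧
    (x = (τ j : ℚ) ∨ (j : ℤ) ≤ padicValRat p (x - τ j))

section HypAux
open Finset


/-- number of `k < m` with `p^j ∣ s*k+1`. -/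
def cnt (p s j m : ℕ) : ℕ := ((Finset.range m).filter (fun k => p ^ j ∣ s * k + 1)).card

lemma count_mod_eq (q α : ℕ) (hα : α < q) (m : ℕ) :
    ((Finset.range m).filter (fun k => k % q = α)).card = (m + q - 1 - α) / q := by
  induction m with
  | zero =>
      simp [Nat.div_eq_of_lt (by omega : q - 1 - α < q), (by omega : 0 + q - 1 - α = q - 1 - α)]
  | succ n ih =>
      rw [Finset.range_add_one, Finset.filter_insert]
      have hdvd : q ∣ (n + q - 1 - α) + 1 ↔ n % q = α := by
        have h1 : (n + q - 1 - α) + 1 = (n + q) - α := by omega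
        rw [h1, ← Nat.modEq_iff_dvd' (by omega : α ≤ n + q)]
        rw [Nat.ModEq, Nat.add_mod_right, Nat.mod_eq_of_lt hα]
        exact eq_comm
      have h2 : n + 1 + q - 1 - α = (n + q - 1 - α) + 1 := by omega
      by_cases hn : n % q = α
      · rw [if_pos hn, Finset.card_insert_of_notMem (by simp), ih, h2, Nat.succ_div,
          if_pos (hdvd.mpr hn)]
      · rw [if_neg hn, ih, h2, Nat.succ_div, if_neg (by rw [hdvd]; exact hn), add_zero]

lemma dvd_iff_mod_eq {s q α : ℕ} (hα : α < q) (hsol : q ∣ s * α + 1)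
    (hcop : Nat.Coprime q s) (k : ℕ) : q ∣ s * k + 1 ↔ k % q = α := by
  constructor
  · intro hk
    have h1 : s * k + 1 ≡ s * α + 1 [MOD q] :=
      ((Nat.modEq_zero_iff_dvd).2 hk).trans ((Nat.modEq_zero_iff_dvd).2 hsol).symm
    have h2 : s * k ≡ s * α [MOD q] := h1.add_right_cancel' 1
    have h3 : k ≡ α [MOD q] := Nat.ModEq.cancel_left_of_coprime hcop h2
    rw [Nat.ModEq, Nat.mod_eq_of_lt hα] at h3
    exact h3
  · intro hk
    have h3 : k ≡ α [MOD q] := by rw [Nat.ModEq, Nat.mod_eq_of_lt hα]; exact hk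
    have h1 : s * k + 1 ≡ s * α + 1 [MOD q] := (h3.mul_left s).add_right 1
    exact (Nat.modEq_zero_iff_dvd).1 (h1.trans ((Nat.modEq_zero_iff_dvd).2 hsol))

lemma cnt_eq {p s j α : ℕ} (hα : α < p ^ j) (hsol : p ^ j ∣ s * α + 1)
    (hcop : Nat.Coprime (p ^ j) s) (m : ℕ) :
    cnt p s j m = (m + p ^ j - 1 - α) / p ^ j := by
  rw [cnt, ← count_mod_eq (p ^ j) α hα m]
  congr 1
  ext k
  simp only [Finset.mem_filter, Finset.mem_range]
  exact and_congr_right fun _ => dvd_iff_mod_eq hα hsol hcop k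

lemma div_decomp (q α m : ℕ) (hq : 0 < q) (hα : α < q) :
    (m + q - 1 - α) / q = m / q + if α < m % q then 1 else 0 := by
  conv_lhs => rw [← Nat.div_add_mod m q]
  have h1 : q * (m / q) + m % q + q - 1 - α = q * (m / q) + (m % q + q - 1 - α) := by omega
  rw [h1, Nat.mul_add_div hq]
  congr 1
  have hr : m % q < q := Nat.mod_lt _ hq
  by_cases h : α < m % q
  · rw [if_pos h]
    exact Nat.div_eq_of_lt_le (by omega) (by omega)
  · rw [if_neg h]
    exact Nat.div_eq_of_lt (by omega)

lemma cnt_antitone {p s s' j α α' : ℕ} (hq : 0 < p ^ j)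
    (hα : α < p ^ j) (hsol : p ^ j ∣ s * α + 1) (hcop : Nat.Coprime (p ^ j) s)
    (hα' : α' < p ^ j) (hsol' : p ^ j ∣ s' * α' + 1) (hcop' : Nat.Coprime (p ^ j) s')
    (hle : α ≤ α') (m : ℕ) : cnt p s' j m ≤ cnt p s j m := by
  rw [cnt_eq hα hsol hcop, cnt_eq hα' hsol' hcop']
  exact Nat.div_le_div_right (by omega)



lemma val_eq_sum_ind {p : ℕ} (hp : p.Prime) {n J : ℕ} (hn : 0 < n) (hJ : n < p ^ J) :
    padicValNat p n = ∑ j ∈ Icc 1 J, if p ^ j ∣ n then 1 else 0 := by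
  have hv : ∀ j : ℕ, p ^ j ∣ n ↔ j ≤ padicValNat p n := by
    intro j
    rw [hp.pow_dvd_iff_le_factorization hn.ne', Nat.factorization_def n hp]
  have hvJ : padicValNat p n < J := by
    by_contra h
    push_neg at h
    have hd : p ^ J ∣ n := (hv J).mpr h
    have := Nat.le_of_dvd hn hd
    omega
  refine Eq.symm ?_
  calc ∑ j ∈ Icc 1 J, (if p ^ j ∣ n then 1 else 0)
      = ∑ j ∈ Icc 1 J, (if j ≤ padicValNat p n then 1 else 0) := by
        exact Finset.sum_congr rfl fun j _ => if_congr (hv j) rfl rfl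
    _ = ∑ j ∈ (Icc 1 J).filter (fun j => j ≤ padicValNat p n), 1 := (Finset.sum_filter _ _).symm
    _ = ((Icc 1 J).filter (fun j => j ≤ padicValNat p n)).card := by
        rw [Finset.card_eq_sum_ones]
    _ = (Icc 1 (padicValNat p n)).card := by
        congr 1
        ext j
        simp only [Finset.mem_filter, Finset.mem_Icc]
        omega
    _ = padicValNat p n := by rw [Nat.card_Icc]; omega

lemma padicValNat_prod {p : ℕ} (hp : p.Prime) (m : ℕ) (f : ℕ → ℕ)
    (hf : ∀ k, 0 < f k) :
    padicValNat p (∏ k ∈ range m, f k) = ∑ k ∈ range m, padicValNat p (f k) := by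
  haveI : Fact p.Prime := ⟨hp⟩
  induction m with
  | zero => simp
  | succ n ih =>
      rw [Finset.prod_range_succ, Finset.sum_range_succ, ← ih]
      exact padicValNat.mul (Finset.prod_pos (fun k _ => hf k)).ne' (hf n).ne'

lemma val_prod_eq_sum_cnt {p : ℕ} (hp : p.Prime) (s m J : ℕ) (hs : 0 < s)
    (hJ : s * m < p ^ J) :
    padicValNat p (∏ k ∈ range m, (s * k + 1)) = ∑ j ∈ Icc 1 J, cnt p s j m := by
  rw [padicValNat_prod hp m _ (fun k => by positivity)]
  have h1 : ∀ k ∈ range m, padicValNat p (s * k + 1)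
      = ∑ j ∈ Icc 1 J, if p ^ j ∣ s * k + 1 then 1 else 0 := by
    intro k hk
    have hk' : k < m := Finset.mem_range.1 hk
    exact val_eq_sum_ind hp (by positivity) (by nlinarith)
  rw [Finset.sum_congr rfl h1, Finset.sum_comm]
  refine Finset.sum_congr rfl fun j _ => ?_
  rw [cnt, Finset.card_eq_sum_ones, Finset.sum_filter]




def Pp (s m : ℕ) : ℕ := ∏ k ∈ range m, (s * k + 1)

lemma Pp_pos (s m : ℕ) : 0 < Pp s m := Finset.prod_pos fun k _ => by positivity

lemma asc_eval_prod (m : ℕ) (x : ℚ) :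
    (ascPochhammer ℚ m).eval x = ∏ i ∈ range m, (x + i) := by
  induction m with
  | zero => simp
  | succ n ih => rw [ascPochhammer_succ_eval, ih, Finset.prod_range_succ]

lemma asc_eval_inv (m s : ℕ) (hs : 0 < s) :
    (ascPochhammer ℚ m).eval (1 / (s : ℚ)) = (Pp s m : ℚ) / (s : ℚ) ^ m := by
  have hs' : (s : ℚ) ≠ 0 := by positivity
  have hpow : (s : ℚ) ^ m = ∏ _i ∈ range m, (s : ℚ) := by
    rw [Finset.prod_const, Finset.card_range]
  rw [asc_eval_prod, eq_div_iff (by positivity), hpow,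
    ← Finset.prod_mul_distrib, Pp, Nat.cast_prod]
  refine Finset.prod_congr rfl fun k _ => ?_
  push_cast
  field_simp
  ring

lemma hypCoeff_eq (m : ℕ) :
    hypCoeff (1 / 5) (1 / 3) (1 / 2) m =
      ((Pp 5 m * Pp 3 m * 2 ^ m : ℕ) : ℚ) / ((Pp 2 m * Pp 1 m * 15 ^ m : ℕ) : ℚ) := by
  have hfac : (m.factorial : ℚ) = (Pp 1 m : ℚ) := by
    rw [Pp, ← Finset.prod_range_add_one_eq_factorial m, Nat.cast_prod, Nat.cast_prod]
    exact Finset.prod_congr rfl fun k _ => by push_cast; ring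
  have e5 := asc_eval_inv m 5 (by norm_num)
  have e3 := asc_eval_inv m 3 (by norm_num)
  have e2 := asc_eval_inv m 2 (by norm_num)
  rw [hypCoeff]
  rw [show ((1:ℚ)/5) = 1/((5:ℕ):ℚ) by norm_num, show ((1:ℚ)/3) = 1/((3:ℕ):ℚ) by norm_num,
    show ((1:ℚ)/2) = 1/((2:ℕ):ℚ) by norm_num, e5, e3, e2, hfac]
  have h5 : (0:ℚ) < (Pp 5 m : ℚ) := by exact_mod_cast Pp_pos 5 m
  have h3 : (0:ℚ) < (Pp 3 m : ℚ) := by exact_mod_cast Pp_pos 3 m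
  have h2 : (0:ℚ) < (Pp 2 m : ℚ) := by exact_mod_cast Pp_pos 2 m
  have h1 : (0:ℚ) < (Pp 1 m : ℚ) := by exact_mod_cast Pp_pos 1 m
  push_cast
  rw [div_eq_div_iff (by positivity) (by positivity)]
  field_simp
  rw [show (15:ℚ) ^ m = 3 ^ m * 5 ^ m by rw [← mul_pow]; norm_num]
  ring

lemma hypCoeff_ne_zero (m : ℕ) : hypCoeff (1 / 5) (1 / 3) (1 / 2) m ≠ 0 := by
  rw [hypCoeff_eq]
  have h5 := Pp_pos 5 m; have h3 := Pp_pos 3 m; have h2 := Pp_pos 2 m; have h1 := Pp_pos 1 m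
  have hn : (0:ℚ) < ((Pp 5 m * Pp 3 m * 2 ^ m : ℕ) : ℚ) := by
    have : 0 < Pp 5 m * Pp 3 m * 2 ^ m := by positivity
    exact_mod_cast this
  have hd : (0:ℚ) < ((Pp 2 m * Pp 1 m * 15 ^ m : ℕ) : ℚ) := by
    have : 0 < Pp 2 m * Pp 1 m * 15 ^ m := by positivity
    exact_mod_cast this
  positivity

lemma val_pow_zero {p : ℕ} (hp : p.Prime) (hp7 : 7 ≤ p) (b m : ℕ) (hb : b ∈ ({2, 15} : Set ℕ)) :
    padicValNat p (b ^ m) = 0 := by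
  apply padicValNat.eq_zero_of_not_dvd
  intro hdvd
  have hb' : p ∣ b := hp.dvd_of_dvd_pow hdvd
  rcases hb with rfl | rfl
  · have := Nat.le_of_dvd (by norm_num) hb'; omega
  · have h15 := Nat.le_of_dvd (by norm_num) hb'
    interval_cases p <;> revert hp hb' <;> decide

lemma val_hypCoeff {p : ℕ} (hp : p.Prime) (hp7 : 7 ≤ p) (m J : ℕ) (hJ : 5 * m < p ^ J) :
    padicValRat p (hypCoeff (1 / 5) (1 / 3) (1 / 2) m) =
      ∑ j ∈ Icc 1 J, ((cnt p 5 j m : ℤ) + (cnt p 3 j m : ℤ)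
        - (cnt p 2 j m : ℤ) - (cnt p 1 j m : ℤ)) := by
  haveI : Fact p.Prime := ⟨hp⟩
  have h5 := (Pp_pos 5 m).ne'; have h3 := (Pp_pos 3 m).ne'
  have h2 := (Pp_pos 2 m).ne'; have h1 := (Pp_pos 1 m).ne'
  have hnum : (Pp 5 m * Pp 3 m * 2 ^ m : ℕ) ≠ 0 := by positivity
  have hden : (Pp 2 m * Pp 1 m * 15 ^ m : ℕ) ≠ 0 := by positivity
  rw [hypCoeff_eq, padicValRat.div (by exact_mod_cast hnum) (by exact_mod_cast hden),
    padicValRat.of_nat, padicValRat.of_nat,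
    padicValNat.mul (Nat.mul_ne_zero h5 h3) (pow_ne_zero m (by norm_num)),
    padicValNat.mul (Nat.mul_ne_zero h2 h1) (pow_ne_zero m (by norm_num)),
    padicValNat.mul h5 h3, padicValNat.mul h2 h1,
    val_pow_zero hp hp7 2 m (by norm_num), val_pow_zero hp hp7 15 m (by norm_num)]
  simp only [Pp]
  rw [    val_prod_eq_sum_cnt hp 5 m J (by norm_num) hJ,
    val_prod_eq_sum_cnt hp 3 m J (by norm_num) (by omega),
    val_prod_eq_sum_cnt hp 2 m J (by norm_num) (by omega),
    val_prod_eq_sum_cnt hp 1 m J (by norm_num) (by omega)]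
  push_cast
  rw [Finset.sum_sub_distrib, Finset.sum_sub_distrib, Finset.sum_add_distrib]
  ring
lemma exists_sol {q s : ℕ} (hq : 1 < q) (hcop : Nat.Coprime s q) :
    ∃ α, α < q ∧ q ∣ s * α + 1 := by
  obtain ⟨t, -, ht⟩ := Nat.exists_mul_mod_eq_one_of_coprime hcop hq
  refine ⟨(t * (q - 1)) % q, Nat.mod_lt _ (by omega), ?_⟩
  have h1 : s * ((t * (q - 1)) % q) ≡ s * (t * (q - 1)) [MOD q] :=
    (Nat.mod_modEq _ _).mul_left s
  have h3 : s * t ≡ 1 [MOD q] := by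
    rw [Nat.ModEq, ht, Nat.mod_eq_of_lt hq]
  have h4 : s * (t * (q - 1)) ≡ 1 * (q - 1) [MOD q] := by
    rw [← mul_assoc]
    exact h3.mul_right _
  have h5 : s * ((t * (q - 1)) % q) + 1 ≡ (q - 1) + 1 [MOD q] := by
    have := (h1.trans h4).add_right 1
    rwa [one_mul] at this
  have h6 : (q - 1) + 1 = q := by omega
  rw [h6] at h5
  exact (Nat.modEq_zero_iff_dvd).1 (h5.trans ((Nat.modEq_zero_iff_dvd).2 dvd_rfl))

lemma cop {p : ℕ} (hp : p.Prime) (hp7 : 7 ≤ p) {s : ℕ} (j : ℕ) (hs : 0 < s) (hs5 : s ≤ 5) :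
    Nat.Coprime (p ^ j) s :=
  Nat.Coprime.pow_left _ ((hp.coprime_iff_not_dvd).2 fun h => by
    have := Nat.le_of_dvd hs h; omega)

lemma pow_odd {p : ℕ} (hp : p.Prime) (hp7 : 7 ≤ p) (j : ℕ) : p ^ j % 2 = 1 := by
  have h2 : p % 2 = 1 := by
    rcases Nat.mod_two_eq_zero_or_one p with h | h
    · exfalso
      have : (2 : ℕ) ∣ p := by omega
      rcases (Nat.Prime.eq_one_or_self_of_dvd hp 2 this) with h' | h' <;> omega
    · exact h
  rw [Nat.pow_mod, h2, one_pow]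
  norm_num

lemma pow_orbit {p : ℕ} {S : Finset ℕ} (h1 : 1 % 15 ∈ S)
    (hcl : ∀ x ∈ S, x * (p % 15) % 15 ∈ S) :
    ∀ j : ℕ, p ^ j % 15 ∈ S := by
  intro j
  induction j with
  | zero => simpa using h1
  | succ n ih =>
      have hm : p ^ (n + 1) % 15 = ((p ^ n % 15) * (p % 15)) % 15 := by
        rw [pow_succ, Nat.mul_mod]
      rw [hm]
      exact hcl _ ih

lemma pow_good {p : ℕ}
    (hgood : p % 15 = 1 ∨ p % 15 = 4 ∨ p % 15 = 7 ∨ p % 15 = 11 ∨ p % 15 = 13) :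
    ∀ j : ℕ, p ^ j % 15 = 1 ∨ p ^ j % 15 = 4 ∨ p ^ j % 15 = 7 ∨
      p ^ j % 15 = 11 ∨ p ^ j % 15 = 13 := by
  intro j
  rcases hgood with h2 | h2 | h2 | h2 | h2
  · have := pow_orbit (p := p) (S := {1}) (by decide) (by rw [h2]; decide) j
    simp only [Finset.mem_insert, Finset.mem_singleton] at this
    omega
  · have := pow_orbit (p := p) (S := {1, 4}) (by decide) (by rw [h2]; decide) j
    simp only [Finset.mem_insert, Finset.mem_singleton] at this
    omega
  · have := pow_orbit (p := p) (S := {1, 4, 7, 13}) (by decide) (by rw [h2]; decide) j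
    simp only [Finset.mem_insert, Finset.mem_singleton] at this
    omega
  · have := pow_orbit (p := p) (S := {1, 11}) (by decide) (by rw [h2]; decide) j
    simp only [Finset.mem_insert, Finset.mem_singleton] at this
    omega
  · have := pow_orbit (p := p) (S := {1, 4, 7, 13}) (by decide) (by rw [h2]; decide) j
    simp only [Finset.mem_insert, Finset.mem_singleton] at this
    omega

lemma p_good_residue {p : ℕ} (hp : p.Prime) (hp7 : 7 ≤ p)
    (h : ¬(p % 15 = 2 ∨ p % 15 = 8 ∨ p % 15 = 14)) :
    p % 15 = 1 ∨ p % 15 = 4 ∨ p % 15 = 7 ∨ p % 15 = 11 ∨ p % 15 = 13 := by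
  have h3 : p % 3 ≠ 0 := by
    intro h'
    have : (3 : ℕ) ∣ p := by omega
    rcases (Nat.Prime.eq_one_or_self_of_dvd hp 3 this) with h'' | h'' <;> omega
  have h5 : p % 5 ≠ 0 := by
    intro h'
    have : (5 : ℕ) ∣ p := by omega
    rcases (Nat.Prime.eq_one_or_self_of_dvd hp 5 this) with h'' | h'' <;> omega
  omega

lemma p_bad_ge17 {p : ℕ} (hp : p.Prime) (hp7 : 7 ≤ p)
    (h : p % 15 = 2 ∨ p % 15 = 8 ∨ p % 15 = 14) : 17 ≤ p := by
  rcases Nat.lt_or_ge p 17 with hlt | h17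
  · interval_cases p <;> revert hp h <;> decide
  · exact h17

lemma good_level {p : ℕ} (hp : p.Prime) (hp7 : 7 ≤ p) {j : ℕ} (hj : 1 ≤ j)
    (hgoodq : p ^ j % 3 = 1 ∨ p ^ j % 5 = 1) (m : ℕ) :
    cnt p 2 j m + cnt p 1 j m ≤ cnt p 5 j m + cnt p 3 j m := by
  have hq1 : 1 < p ^ j := Nat.one_lt_pow (by omega) (by omega)
  have hq0 : 0 < p ^ j := by omega
  have hq2 : p ^ j % 2 = 1 := pow_odd hp hp7 j
  set q := p ^ j with hqdef
  have hsol2 : q ∣ 2 * ((q - 1) / 2) + 1 := by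
    have h : 2 * ((q - 1) / 2) + 1 = q := by omega
    rw [h]
  have hα2 : (q - 1) / 2 < q := by omega
  have hsol1 : q ∣ 1 * (q - 1) + 1 := by
    have h : 1 * (q - 1) + 1 = q := by omega
    rw [h]
  have hα1 : q - 1 < q := by omega
  rcases hgoodq with h3 | h5
  · have hsol3 : q ∣ 3 * ((q - 1) / 3) + 1 := by
      have h : 3 * ((q - 1) / 3) + 1 = q := by omega
      rw [h]
    have hα3 : (q - 1) / 3 < q := by omega
    obtain ⟨α5, hα5, hsol5⟩ := exists_sol hq1 ((cop (s := 5) hp hp7 j (by norm_num) (by norm_num)).symm)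
    have c23 : cnt p 2 j m ≤ cnt p 3 j m :=
      cnt_antitone hq0 hα3 hsol3 (cop (s := 3) hp hp7 j (by norm_num) (by norm_num))
        hα2 hsol2 (cop (s := 2) hp hp7 j (by norm_num) (by norm_num))
        (by omega) m
    have c15 : cnt p 1 j m ≤ cnt p 5 j m :=
      cnt_antitone hq0 hα5 hsol5 (cop (s := 5) hp hp7 j (by norm_num) (by norm_num))
        hα1 hsol1 (cop (s := 1) hp hp7 j (by norm_num) (by norm_num))
        (by omega) m
    omega
  · have hsol5 : q ∣ 5 * ((q - 1) / 5) + 1 := by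
      have h : 5 * ((q - 1) / 5) + 1 = q := by omega
      rw [h]
    have hα5 : (q - 1) / 5 < q := by omega
    obtain ⟨α3, hα3, hsol3⟩ := exists_sol hq1 ((cop (s := 3) hp hp7 j (by norm_num) (by norm_num)).symm)
    have c25 : cnt p 2 j m ≤ cnt p 5 j m :=
      cnt_antitone hq0 hα5 hsol5 (cop (s := 5) hp hp7 j (by norm_num) (by norm_num))
        hα2 hsol2 (cop (s := 2) hp hp7 j (by norm_num) (by norm_num))
        (by omega) m
    have c13 : cnt p 1 j m ≤ cnt p 3 j m :=
      cnt_antitone hq0 hα3 hsol3 (cop (s := 3) hp hp7 j (by norm_num) (by norm_num))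
        hα1 hsol1 (cop (s := 1) hp hp7 j (by norm_num) (by norm_num))
        (by omega) m
    omega

lemma good_nonneg {p : ℕ} (hp : p.Prime) (hp7 : 7 ≤ p)
    (h : ¬(p % 15 = 2 ∨ p % 15 = 8 ∨ p % 15 = 14)) (m : ℕ) :
    0 ≤ padicValRat p (hypCoeff (1 / 5) (1 / 3) (1 / 2) m) := by
  have hJ : 5 * m < p ^ (5 * m + 1) := by
    calc 5 * m < 2 ^ (5 * m) := Nat.lt_pow_self (by norm_num)
    _ ≤ p ^ (5 * m) := Nat.pow_le_pow_left (by omega) _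
    _ ≤ p ^ (5 * m + 1) := Nat.pow_le_pow_right (by omega) (by omega)
  rw [val_hypCoeff hp hp7 m (5 * m + 1) hJ]
  apply Finset.sum_nonneg
  intro j hj
  have hj1 : 1 ≤ j := (Finset.mem_Icc.1 hj).1
  have hgq := pow_good (p_good_residue hp hp7 h) j
  have hg : p ^ j % 3 = 1 ∨ p ^ j % 5 = 1 := by omega
  have := good_level hp hp7 hj1 hg m
  omega
def build (p : ℕ) : ℕ → ℕ
  | 0 => 0
  | j + 1 =>
    if p ^ (j + 1) % 15 = 2 ∨ p ^ (j + 1) % 15 = 14 then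
      ((p ^ (j + 1) - 1) / 2 + 1) +
        ((build p j + p ^ j - ((p ^ (j + 1) - 1) / 2 + 1) % p ^ j) % p ^ j)
    else build p j

lemma build_succ (p j : ℕ) : build p (j + 1) =
    if p ^ (j + 1) % 15 = 2 ∨ p ^ (j + 1) % 15 = 14 then
      ((p ^ (j + 1) - 1) / 2 + 1) +
        ((build p j + p ^ j - ((p ^ (j + 1) - 1) / 2 + 1) % p ^ j) % p ^ j)
    else build p j := rfl

lemma build_lt {p : ℕ} (hp17 : 17 ≤ p) : ∀ j, build p j < p ^ j := by
  intro j
  induction j with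
  | zero => simp [build]
  | succ n ih =>
      rw [build_succ]
      have hA : 0 < p ^ n := pow_pos (by omega : 0 < p) n
      have hq : p ^ (n + 1) = p ^ n * p := pow_succ p n
      have hq17 : 17 * p ^ n ≤ p ^ (n + 1) := by rw [hq]; nlinarith
      split
      · generalize hT : (build p n + p ^ n - ((p ^ (n + 1) - 1) / 2 + 1) % p ^ n) % p ^ n = t
        have ht : t < p ^ n := hT ▸ Nat.mod_lt _ hA
        omega
      · calc build p n < p ^ n := ih
          _ ≤ p ^ (n + 1) := by rw [hq]; nlinarith

lemma build_mod {p : ℕ} (hp17 : 17 ≤ p) (j : ℕ) : build p (j + 1) % p ^ j = build p j := by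
  have hA : 0 < p ^ j := pow_pos (by omega : 0 < p) j
  have hblt : build p j < p ^ j := build_lt hp17 j
  rw [build_succ]
  split
  · set A := p ^ j with hAdef
    set w := (p ^ (j + 1) - 1) / 2 + 1 with hwdef
    set b := build p j with hbdef
    have e1 : (w + (b + A - w % A) % A) % A = (w + (b + A - w % A)) % A := by
      conv_rhs => rw [Nat.add_mod]
      rw [Nat.add_mod, Nat.mod_mod_of_dvd _ (dvd_refl A)]
    have hwm : w % A ≤ w := Nat.mod_le _ _
    have hwmA : w % A < A := Nat.mod_lt _ hA
    obtain ⟨u, hu⟩ : ∃ u, A * u + w % A = w := ⟨w / A, Nat.div_add_mod w A⟩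
    have e2 : w + (b + A - w % A) = b + A + A * u := by omega
    rw [e1, e2, Nat.add_mul_mod_self_left, Nat.add_mod_right, Nat.mod_eq_of_lt hblt]
  · exact Nat.mod_eq_of_lt hblt

lemma build_mod_le {p : ℕ} (hp17 : 17 ≤ p) {i L : ℕ} (h : i ≤ L) :
    build p L % p ^ i = build p i := by
  induction L with
  | zero =>
      have : i = 0 := by omega
      subst this
      exact Nat.mod_eq_of_lt (build_lt hp17 0)
  | succ n ih =>
      rcases Nat.lt_or_ge i (n + 1) with hlt | hge
      · have hi : i ≤ n := by omega
        rw [← Nat.mod_mod_of_dvd _ (pow_dvd_pow p hi), build_mod hp17 n, ih hi]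
      · have : i = n + 1 := by omega
        subst this
        exact Nat.mod_eq_of_lt (build_lt hp17 (n + 1))

lemma build_bad {p : ℕ} (hp17 : 17 ≤ p) (j : ℕ)
    (hbad : p ^ (j + 1) % 15 = 2 ∨ p ^ (j + 1) % 15 = 14) :
    (p ^ (j + 1) - 1) / 2 < build p (j + 1) ∧
      build p (j + 1) ≤ (p ^ (j + 1) - 1) / 2 + p ^ j := by
  have hA : 0 < p ^ j := pow_pos (by omega : 0 < p) j
  have hq17 : 17 * p ^ j ≤ p ^ (j + 1) := by rw [pow_succ p j]; nlinarith
  rw [build_succ, if_pos hbad]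
  generalize hT : (build p j + p ^ j - ((p ^ (j + 1) - 1) / 2 + 1) % p ^ j) % p ^ j = t
  have ht : t < p ^ j := hT ▸ Nat.mod_lt _ hA
  omega

lemma build_good (p j : ℕ) (hgood : ¬(p ^ (j + 1) % 15 = 2 ∨ p ^ (j + 1) % 15 = 14)) :
    build p (j + 1) = build p j := by rw [build_succ, if_neg hgood]

lemma cnt_zero_of_large {p s j m : ℕ} (hm : ∀ k, k < m → s * k + 1 < p ^ j) :
    cnt p s j m = 0 := by
  rw [cnt, Finset.card_eq_zero, Finset.filter_eq_empty_iff]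
  intro k hk
  intro hdvd
  have h1 := Nat.le_of_dvd (by positivity) hdvd
  have := hm k (Finset.mem_range.1 hk)
  omega

lemma cnt_formula {p s j m α : ℕ} (hq0 : 0 < p ^ j) (hα : α < p ^ j)
    (hsol : p ^ j ∣ s * α + 1) (hcop : Nat.Coprime (p ^ j) s) :
    cnt p s j m = m / p ^ j + if α < m % p ^ j then 1 else 0 := by
  rw [cnt_eq hα hsol hcop, div_decomp _ _ _ hq0 hα]

lemma f_bad {p : ℕ} (hp : p.Prime) (hp17 : 17 ≤ p) {L j : ℕ} (hj1 : 1 ≤ j) (hjL : j ≤ L)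
    (hbad : p ^ j % 15 = 2 ∨ p ^ j % 15 = 14) :
    (cnt p 5 j (build p L) : ℤ) + cnt p 3 j (build p L)
      - cnt p 2 j (build p L) - cnt p 1 j (build p L) = -1 := by
  obtain ⟨i, rfl⟩ : ∃ i, j = i + 1 := ⟨j - 1, by omega⟩
  have hp7 : 7 ≤ p := by omega
  have hA : 0 < p ^ i := pow_pos (by omega : 0 < p) i
  have hq0 : 0 < p ^ (i + 1) := pow_pos (by omega : 0 < p) (i + 1)
  have hq17 : 17 * p ^ i ≤ p ^ (i + 1) := by rw [pow_succ p i]; nlinarith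
  have hq2 : p ^ (i + 1) % 2 = 1 := pow_odd hp hp7 (i + 1)
  have hr : build p L % p ^ (i + 1) = build p (i + 1) := build_mod_le hp17 hjL
  obtain ⟨hr1, hr2⟩ := build_bad hp17 i hbad
  have hsol2 : p ^ (i + 1) ∣ 2 * ((p ^ (i + 1) - 1) / 2) + 1 := by
    have h : 2 * ((p ^ (i + 1) - 1) / 2) + 1 = p ^ (i + 1) := by omega
    rw [h]
  have c2 : cnt p 2 (i + 1) (build p L) = build p L / p ^ (i + 1) + 1 := by
    rw [cnt_formula hq0 (by omega) hsol2 (cop (s := 2) hp hp7 (i + 1) (by norm_num) (by norm_num)),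
      hr, if_pos (by omega)]
  have hsol1 : p ^ (i + 1) ∣ 1 * (p ^ (i + 1) - 1) + 1 := by
    have h : 1 * (p ^ (i + 1) - 1) + 1 = p ^ (i + 1) := by omega
    rw [h]
  have c1 : cnt p 1 (i + 1) (build p L) = build p L / p ^ (i + 1) := by
    rw [cnt_formula hq0 (by omega) hsol1 (cop (s := 1) hp hp7 (i + 1) (by norm_num) (by norm_num)),
      hr, if_neg (by omega), add_zero]
  have hsol3 : p ^ (i + 1) ∣ 3 * ((2 * p ^ (i + 1) - 1) / 3) + 1 := by
    have h : 3 * ((2 * p ^ (i + 1) - 1) / 3) + 1 = 2 * p ^ (i + 1) := by omega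
    rw [h]
    exact dvd_mul_left _ 2
  have c3 : cnt p 3 (i + 1) (build p L) = build p L / p ^ (i + 1) := by
    rw [cnt_formula hq0 (by omega) hsol3 (cop (s := 3) hp hp7 (i + 1) (by norm_num) (by norm_num)),
      hr, if_neg (by omega), add_zero]
  have c5 : cnt p 5 (i + 1) (build p L) = build p L / p ^ (i + 1) := by
    rcases (by omega : p ^ (i + 1) % 5 = 2 ∨ p ^ (i + 1) % 5 = 4) with h5 | h5
    · have hsol5 : p ^ (i + 1) ∣ 5 * ((3 * p ^ (i + 1) - 1) / 5) + 1 := by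
        have h : 5 * ((3 * p ^ (i + 1) - 1) / 5) + 1 = 3 * p ^ (i + 1) := by omega
        rw [h]
        exact dvd_mul_left _ 3
      rw [cnt_formula hq0 (by omega) hsol5
        (cop (s := 5) hp hp7 (i + 1) (by norm_num) (by norm_num)),
        hr, if_neg (by omega), add_zero]
    · have hsol5 : p ^ (i + 1) ∣ 5 * ((4 * p ^ (i + 1) - 1) / 5) + 1 := by
        have h : 5 * ((4 * p ^ (i + 1) - 1) / 5) + 1 = 4 * p ^ (i + 1) := by omega
        rw [h]
        exact dvd_mul_left _ 4
      rw [cnt_formula hq0 (by omega) hsol5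
        (cop (s := 5) hp hp7 (i + 1) (by norm_num) (by norm_num)),
        hr, if_neg (by omega), add_zero]
  rw [c2, c1, c3, c5]
  push_cast
  ring

lemma f_good {p : ℕ} (hp : p.Prime) (hp17 : 17 ≤ p) {L j : ℕ} (hj1 : 1 ≤ j) (hjL : j ≤ L)
    (hgood : ¬(p ^ j % 15 = 2 ∨ p ^ j % 15 = 14)) :
    (cnt p 5 j (build p L) : ℤ) + cnt p 3 j (build p L)
      - cnt p 2 j (build p L) - cnt p 1 j (build p L) = 0 := by
  obtain ⟨i, rfl⟩ : ∃ i, j = i + 1 := ⟨j - 1, by omega⟩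
  have hp7 : 7 ≤ p := by omega
  have hA : 0 < p ^ i := pow_pos (by omega : 0 < p) i
  have hq0 : 0 < p ^ (i + 1) := pow_pos (by omega : 0 < p) (i + 1)
  have hq17 : 17 * p ^ i ≤ p ^ (i + 1) := by rw [pow_succ p i]; nlinarith
  have hr : build p L % p ^ (i + 1) = build p (i + 1) := build_mod_le hp17 hjL
  have hrlt : build p (i + 1) < p ^ i := by
    rw [build_good p i hgood]
    exact build_lt hp17 i
  have key : ∀ s : ℕ, 0 < s → s ≤ 5 → cnt p s (i + 1) (build p L) = build p L / p ^ (i + 1) := by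
    intro s hs hs5
    have hq1 : 1 < p ^ (i + 1) := Nat.one_lt_pow (by omega) (by omega)
    obtain ⟨α, hα, hsol⟩ := exists_sol hq1 ((cop (s := s) hp hp7 (i + 1) hs hs5).symm)
    have hge : p ^ (i + 1) ≤ s * α + 1 := Nat.le_of_dvd (by positivity) hsol
    have h5α : s * α ≤ 5 * α := Nat.mul_le_mul_right α hs5
    rw [cnt_formula hq0 hα hsol (cop (s := s) hp hp7 (i + 1) hs hs5), hr, if_neg (by omega),
      add_zero]
  rw [key 5 (by norm_num) (by norm_num), key 3 (by norm_num) (by norm_num),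
    key 2 (by norm_num) (by norm_num), key 1 (by norm_num) (by norm_num)]
  push_cast
  ring
lemma pow4_mod_one {p : ℕ} (hbadp : p % 15 = 2 ∨ p % 15 = 8 ∨ p % 15 = 14) :
    p ^ 4 % 15 = 1 := by
  rw [Nat.pow_mod]
  rcases hbadp with h | h | h <;> rw [h] <;> norm_num

lemma bad_period {p : ℕ} (hbadp : p % 15 = 2 ∨ p % 15 = 8 ∨ p % 15 = 14) (j : ℕ) :
    p ^ (j + 4) % 15 = p ^ j % 15 := by
  rw [pow_add, Nat.mul_mod, pow4_mod_one hbadp, mul_one, Nat.mod_mod_of_dvd _ (dvd_refl 15)]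

lemma exists_j0 {p : ℕ} (hbadp : p % 15 = 2 ∨ p % 15 = 8 ∨ p % 15 = 14) :
    ∃ j0, 1 ≤ j0 ∧ j0 ≤ 3 ∧ (p ^ j0 % 15 = 2 ∨ p ^ j0 % 15 = 14) := by
  rcases hbadp with h | h | h
  · exact ⟨1, by omega, by omega, by rw [pow_one]; omega⟩
  · refine ⟨3, by omega, by omega, ?_⟩
    rw [Nat.pow_mod, h]
    norm_num
  · exact ⟨1, by omega, by omega, by rw [pow_one]; omega⟩

lemma bad_at {p : ℕ} (hbadp : p % 15 = 2 ∨ p % 15 = 8 ∨ p % 15 = 14) (j0 i : ℕ) :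
    p ^ (j0 + 4 * i) % 15 = p ^ j0 % 15 := by
  induction i with
  | zero => norm_num
  | succ n ih =>
      have h : j0 + 4 * (n + 1) = (j0 + 4 * n) + 4 := by ring
      rw [h, bad_period hbadp, ih]

lemma bad_unbounded {p : ℕ} (hp : p.Prime) (hp7 : 7 ≤ p)
    (hbadp : p % 15 = 2 ∨ p % 15 = 8 ∨ p % 15 = 14) (N : ℕ) :
    ∃ m : ℕ, padicValRat p (hypCoeff (1 / 5) (1 / 3) (1 / 2) m) < -(N : ℤ) := by
  have hp17 := p_bad_ge17 hp hp7 hbadp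
  obtain ⟨j0, hj01, hj03, hj0bad⟩ := exists_j0 hbadp
  set K := N + 1 with hK
  set L := 4 * K with hL
  set m := build p L with hm
  refine ⟨m, ?_⟩
  have hmlt : m < p ^ L := build_lt hp17 L
  have hLpos : 0 < p ^ L := pow_pos (by omega : 0 < p) L
  have hp2 : 49 ≤ p ^ 2 := by nlinarith
  have hpow : p ^ (L + 2) = p ^ L * p ^ 2 := pow_add p L 2
  have hJ : 5 * m < p ^ (L + 2) := by nlinarith
  have hval : padicValRat p (hypCoeff (1 / 5) (1 / 3) (1 / 2) m) =
      ∑ j ∈ Icc 1 (L + 2), ((cnt p 5 j m : ℤ) + cnt p 3 j m - cnt p 2 j m - cnt p 1 j m) :=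
    val_hypCoeff hp hp7 m (L + 2) hJ
  rw [hval]
  set S := (Finset.Icc 1 L).filter (fun j => p ^ j % 15 = 2 ∨ p ^ j % 15 = 14) with hS
  have hsub : S ⊆ Finset.Icc 1 (L + 2) := by
    intro j hj
    simp only [hS, Finset.mem_filter, Finset.mem_Icc] at hj ⊢
    omega
  have hSval : ∀ j ∈ S,
      (cnt p 5 j m : ℤ) + cnt p 3 j m - cnt p 2 j m - cnt p 1 j m = -1 := by
    intro j hj
    simp only [hS, Finset.mem_filter, Finset.mem_Icc] at hj
    exact f_bad hp hp17 hj.1.1 hj.1.2 hj.2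
  have hrest : ∀ j ∈ Finset.Icc 1 (L + 2) \ S,
      (cnt p 5 j m : ℤ) + cnt p 3 j m - cnt p 2 j m - cnt p 1 j m ≤ 0 := by
    intro j hj
    simp only [Finset.mem_sdiff, hS, Finset.mem_filter, Finset.mem_Icc] at hj
    obtain ⟨⟨hj1, hj2⟩, hjS⟩ := hj
    rcases Nat.lt_or_ge L j with hgt | hle
    · have hz : ∀ s : ℕ, 0 < s → s ≤ 5 → cnt p s j m = 0 := by
        intro s hs hs5
        apply cnt_zero_of_large
        intro k hk
        have h0 : s * k ≤ 5 * k := Nat.mul_le_mul_right k hs5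
        have h2 : p ^ (L + 1) ≤ p ^ j := Nat.pow_le_pow_right (by omega) (by omega)
        have h3 : p ^ (L + 1) = p ^ L * p := pow_succ p L
        have h4 : 5 * p ^ L ≤ p ^ (L + 1) := by rw [h3]; nlinarith
        omega
      rw [hz 5 (by norm_num) (by norm_num), hz 3 (by norm_num) (by norm_num),
        hz 2 (by norm_num) (by norm_num), hz 1 (by norm_num) (by norm_num)]
      norm_num
    · have hb : ¬(p ^ j % 15 = 2 ∨ p ^ j % 15 = 14) := by
        intro hb
        exact hjS ⟨⟨hj1, hle⟩, hb⟩
      rw [f_good hp hp17 hj1 hle hb]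
  have hcard : K ≤ S.card := by
    have hmem : ∀ i ∈ Finset.range K, j0 + 4 * i ∈ S := by
      intro i hi
      have hi' : i < K := Finset.mem_range.1 hi
      simp only [hS, Finset.mem_filter, Finset.mem_Icc]
      refine ⟨⟨by omega, by omega⟩, ?_⟩
      rw [bad_at hbadp j0 i]
      exact hj0bad
    have hinj : Set.InjOn (fun i => j0 + 4 * i) (Finset.range K) := by
      intro a _ b _ hab
      simp only at hab
      omega
    have := Finset.card_le_card_of_injOn _ hmem hinj
    rwa [Finset.card_range] at this
  have hsplit := Finset.sum_sdiff (f := fun j =>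
    (cnt p 5 j m : ℤ) + cnt p 3 j m - cnt p 2 j m - cnt p 1 j m) hsub
  beta_reduce at hsplit
  have h1 : ∑ j ∈ S, ((cnt p 5 j m : ℤ) + cnt p 3 j m - cnt p 2 j m - cnt p 1 j m)
      = -(S.card : ℤ) := by
    rw [Finset.sum_congr rfl hSval, Finset.sum_const]
    simp
  have h2 : ∑ j ∈ Finset.Icc 1 (L + 2) \ S,
      ((cnt p 5 j m : ℤ) + cnt p 3 j m - cnt p 2 j m - cnt p 1 j m) ≤ 0 :=
    Finset.sum_nonpos hrest
  have h3 : (K : ℤ) ≤ (S.card : ℤ) := by exact_mod_cast hcard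
  have h4 : (K : ℤ) = (N : ℤ) + 1 := by rw [hK]; push_cast; ring
  omega


end HypAux

/-- For primes `p ≥ 7`, the coefficients of `₂F₁(1/5, 1/3; 1/2; z)` are
`p`-adically unbounded iff `p ≡ 2, 8, 14 (mod 15)`; for all other primes
`p ≥ 7` the coefficients are `p`-integral. -/
theorem stmt_18 (p : ℕ) (hp : p.Prime) (hp7 : 7 ≤ p) :
    (UnboundedAt p (1 / 5) (1 / 3) (1 / 2) ↔
      (p % 15 = 2 ∨ p % 15 = 8 ∨ p % 15 = 14)) ∧
    (¬ (p % 15 = 2 ∨ p % 15 = 8 ∨ p % 15 = 14) →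
      ∀ m : ℕ, 0 ≤ padicValRat p (hypCoeff (1 / 5) (1 / 3) (1 / 2) m)) := by
  constructor
  · constructor
    · intro hU
      by_contra hbad
      obtain ⟨m, hm⟩ := hU 0
      have hnn := good_nonneg hp hp7 hbad m
      norm_num at hm
      omega
    · intro hbadp
      intro N
      exact bad_unbounded hp hp7 hbadp N
  · intro h m
    exact good_nonneg hp hp7 h m
end

section
/- For every prime p ≥ 7 and every m ≥ 0, the m-th coefficient A_m of ₂F₁(1/6, 5/6; 1/5; z) satisfies v_p(A_m) ≥ 0; that is, the coefficients of ₂F₁(1/6, 5/6; 1/5; z) are p-integral for all primes p ≥ 7. -/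
open scoped BigOperators

set_option linter.unusedVariables false


-- mod characterization
lemma aux_mod_iff_dvd {m q r : ℕ} (hq : 0 < q) (hr : r < q) :
    m % q = r ↔ q ∣ m + (q - r) := by
  constructor
  · intro h
    refine ⟨m / q + 1, ?_⟩
    have hdm := Nat.div_add_mod m q
    rw [Nat.mul_add, Nat.mul_one]
    omega
  · rintro ⟨c, hc⟩
    have hc1 : 1 ≤ c := by
      rcases Nat.eq_zero_or_pos c with h | h
      · subst h; omega
      · exact h
    have h2 : q * (c - 1) + q = q * c := by
      rw [← Nat.mul_succ]; congr 1; omega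
    have hm : m = q * (c - 1) + r := by omega
    rw [hm, Nat.mul_add_mod, Nat.mod_eq_of_lt hr]

lemma aux_count (m q r : ℕ) (hq : 0 < q) (hr : r < q) :
    (∑ k ∈ Finset.range m, if k % q = r then 1 else 0) = (m + (q - 1 - r)) / q := by
  induction m with
  | zero => simp [Nat.div_eq_of_lt (by omega : q - 1 - r < q)]
  | succ m ih =>
    rw [Finset.sum_range_succ, ih]
    have h1 : m + 1 + (q - 1 - r) = (m + (q - 1 - r)) + 1 := by omega
    rw [h1, Nat.succ_div]
    have h2 : m + (q - 1 - r) + 1 = m + (q - r) := by omega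
    rw [h2]
    rw [if_congr (aux_mod_iff_dvd hq hr) rfl rfl]

-- existence of a residue solving u + d*r ≡ 0 mod q
lemma aux_exists_residue (q d u : ℕ) (hq : 1 < q) (hd : Nat.Coprime d q) :
    ∃ r : ℕ, r < q ∧ q ∣ u + d * r := by
  haveI : NeZero q := ⟨by omega⟩
  have hu : IsUnit (d : ZMod q) := (ZMod.isUnit_iff_coprime d q).2 hd
  obtain ⟨v, hv⟩ := hu.exists_right_inv
  refine ⟨(v * (-(u : ZMod q))).val, ZMod.val_lt _, ?_⟩
  have : ((u + d * (v * (-(u : ZMod q))).val : ℕ) : ZMod q) = 0 := by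
    push_cast
    rw [ZMod.natCast_val, ZMod.cast_id]
    calc (u : ZMod q) + d * (v * (-(u : ZMod q)))
        = (u : ZMod q) + (d * v) * (-(u : ZMod q)) := by ring
      _ = 0 := by rw [hv]; ring
  exact (ZMod.natCast_eq_zero_iff _ _).1 this

-- divisibility as residue condition
lemma aux_dvd_iff_mod (q d u r : ℕ) (hd : Nat.Coprime d q)
    (hr : r < q) (hdr : q ∣ u + d * r) (k : ℕ) :
    q ∣ u + d * k ↔ k % q = r := by
  have hdr' : u + d * r ≡ 0 [MOD q] := Nat.modEq_zero_iff_dvd.2 hdr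
  constructor
  · intro h
    have h0 : u + d * k ≡ u + d * r [MOD q] :=
      (Nat.modEq_zero_iff_dvd.2 h).trans hdr'.symm
    have h1 : d * k ≡ d * r [MOD q] := Nat.ModEq.add_left_cancel' u h0
    have h2 : k ≡ r [MOD q] := Nat.ModEq.cancel_left_of_coprime hd.symm h1
    calc k % q = r % q := h2
    _ = r := Nat.mod_eq_of_lt hr
  · intro h
    have h2 : k ≡ r [MOD q] := by unfold Nat.ModEq; rw [h, Nat.mod_eq_of_lt hr]
    have h3 : u + d * k ≡ u + d * r [MOD q] := (h2.mul_left d).add_left u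
    exact Nat.modEq_zero_iff_dvd.1 (h3.trans hdr')

-- the key per-modulus inequality
lemma aux_key (q m : ℕ) (hq : 7 ≤ q) (h5 : Nat.Coprime 5 q) (h6 : Nat.Coprime 6 q) :
    ((∑ k ∈ Finset.range m, if q ∣ 1 + 5 * k then 1 else 0)
      + ∑ k ∈ Finset.range m, if q ∣ 1 + k then 1 else 0)
    ≤ (∑ k ∈ Finset.range m, if q ∣ 1 + 6 * k then 1 else 0)
      + ∑ k ∈ Finset.range m, if q ∣ 5 + 6 * k then 1 else 0 := by
  have hq0 : 0 < q := by omega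
  obtain ⟨r1, hr1, hdr1⟩ := aux_exists_residue q 6 1 (by omega) h6
  obtain ⟨r3, hr3, hdr3⟩ := aux_exists_residue q 5 1 (by omega) h5
  set r2 := q - 1 - r1 with hr2def
  have hr2 : r2 < q := by omega
  have hdr2 : q ∣ 5 + 6 * r2 := by
    have he : 5 + 6 * r2 = 6 * q - (1 + 6 * r1) := by omega
    rw [he]
    exact Nat.dvd_sub (Dvd.intro_left 6 rfl) hdr1
  have hdr4 : q ∣ 1 + 1 * (q - 1) := by
    have : 1 + 1 * (q - 1) = q := by omega
    rw [this]
  have hr4 : q - 1 < q := by omega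
  -- rewrite all four sums as division expressions
  have e1 : (∑ k ∈ Finset.range m, if q ∣ 1 + 6 * k then 1 else 0)
      = (m + (q - 1 - r1)) / q := by
    rw [Finset.sum_congr rfl
      (fun k _ => if_congr (aux_dvd_iff_mod q 6 1 r1 h6 hr1 hdr1 k) rfl rfl)]
    exact aux_count m q r1 hq0 hr1
  have e2 : (∑ k ∈ Finset.range m, if q ∣ 5 + 6 * k then 1 else 0)
      = (m + (q - 1 - r2)) / q := by
    rw [Finset.sum_congr rfl
      (fun k _ => if_congr (aux_dvd_iff_mod q 6 5 r2 h6 hr2 hdr2 k) rfl rfl)]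
    exact aux_count m q r2 hq0 hr2
  have e3 : (∑ k ∈ Finset.range m, if q ∣ 1 + 5 * k then 1 else 0)
      = (m + (q - 1 - r3)) / q := by
    rw [Finset.sum_congr rfl
      (fun k _ => if_congr (aux_dvd_iff_mod q 5 1 r3 h5 hr3 hdr3 k) rfl rfl)]
    exact aux_count m q r3 hq0 hr3
  have e4 : (∑ k ∈ Finset.range m, if q ∣ 1 + k then 1 else 0)
      = (m + (q - 1 - (q - 1))) / q := by
    have h14 : ∀ k : ℕ, q ∣ 1 + k ↔ k % q = q - 1 := by
      intro k
      have := aux_dvd_iff_mod q 1 1 (q - 1) (Nat.coprime_one_left q) hr4 hdr4 k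
      rwa [one_mul] at this
    rw [Finset.sum_congr rfl (fun k _ => if_congr (h14 k) rfl rfl)]
    exact aux_count m q (q - 1) hq0 hr4
  rw [e1, e2, e3, e4]
  -- the interlacing inequality
  have hr1pos : 1 ≤ r1 := by
    rcases Nat.eq_zero_or_pos r1 with h | h
    · exfalso; rw [h] at hdr1; simp at hdr1; omega
    · exact h
  have hr3pos : 1 ≤ r3 := by
    rcases Nat.eq_zero_or_pos r3 with h | h
    · exfalso; rw [h] at hdr3; simp at hdr3; omega
    · exact h
  obtain ⟨s, hs⟩ := hdr1
  obtain ⟨t, ht⟩ := hdr3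
  have hs1 : 1 ≤ s := by
    rcases Nat.eq_zero_or_pos s with h | h
    · rw [h, Nat.mul_zero] at hs; omega
    · exact h
  have ht1 : 1 ≤ t := by
    rcases Nat.eq_zero_or_pos t with h | h
    · rw [h, Nat.mul_zero] at ht; omega
    · exact h
  have hs5 : s ≤ 5 := by
    have h1 : q * s < q * 6 := by omega
    have := Nat.lt_of_mul_lt_mul_left h1
    omega
  have ht4 : t ≤ 4 := by
    have h1 : q * t < q * 5 := by omega
    have := Nat.lt_of_mul_lt_mul_left h1
    omega
  have hmin : r1 ≤ r3 ∨ r2 ≤ r3 := by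
    interval_cases s <;> interval_cases t <;> omega
  rcases hmin with h | h
  · have A : (m + (q - 1 - r3)) / q ≤ (m + (q - 1 - r1)) / q :=
      Nat.div_le_div_right (by omega)
    have B : (m + (q - 1 - (q - 1))) / q ≤ (m + (q - 1 - r2)) / q :=
      Nat.div_le_div_right (by omega)
    omega
  · have A : (m + (q - 1 - r3)) / q ≤ (m + (q - 1 - r2)) / q :=
      Nat.div_le_div_right (by omega)
    have B : (m + (q - 1 - (q - 1))) / q ≤ (m + (q - 1 - r1)) / q :=
      Nat.div_le_div_right (by omega)
    omega

-- padicValNat as a truncated sum of indicator functions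
lemma aux_val_sum (p n J : ℕ) (hp : p.Prime) (hn : 0 < n) (hnJ : n < p ^ J) :
    padicValNat p n = ∑ j ∈ Finset.Ico 1 J, if p ^ j ∣ n then 1 else 0 := by
  have hdvd : ∀ j : ℕ, p ^ j ∣ n ↔ j ≤ padicValNat p n := by
    intro j
    rw [← Nat.factorization_def n hp]
    exact hp.pow_dvd_iff_le_factorization hn.ne'
  have hvJ : padicValNat p n < J := by
    have h1 : p ^ padicValNat p n ≤ n := Nat.le_of_dvd hn pow_padicValNat_dvd
    exact (Nat.pow_lt_pow_iff_right hp.one_lt).1 (lt_of_le_of_lt h1 hnJ)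
  rw [Finset.sum_congr rfl (fun j _ => if_congr (hdvd j) rfl rfl)]
  have hfil : (Finset.Ico 1 J).filter (fun j => j ≤ padicValNat p n)
      = Finset.Ico 1 (padicValNat p n + 1) := by
    ext j
    simp only [Finset.mem_filter, Finset.mem_Ico]
    omega
  rw [← Finset.card_filter, hfil, Nat.card_Ico]
  omega

-- valuation of a quotient of naturals with denominator prime to p
lemma aux_ratval (p : ℕ) [Fact p.Prime] (n d : ℕ) (hn : 0 < n) (hd : 0 < d)
    (hdp : ¬ p ∣ d) :
    padicValRat p ((n : ℚ) / d) = padicValNat p n := by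
  have hn' : (n : ℚ) ≠ 0 := by positivity
  have hd' : (d : ℚ) ≠ 0 := by positivity
  rw [padicValRat.div hn' hd', padicValRat.of_nat, padicValRat.of_nat,
    padicValNat.eq_zero_of_not_dvd hdp]
  simp

-- valuation of a product
lemma aux_prodval (p : ℕ) [Fact p.Prime] (f : ℕ → ℚ) (m : ℕ)
    (hf : ∀ k, k < m → f k ≠ 0) :
    padicValRat p (∏ k ∈ Finset.range m, f k)
      = ∑ k ∈ Finset.range m, padicValRat p (f k) := by
  induction m with
  | zero => simp
  | succ m ih =>
    rw [Finset.prod_range_succ, Finset.sum_range_succ,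
      padicValRat.mul (Finset.prod_ne_zero_iff.2 fun k hk => hf k (by
        simp only [Finset.mem_range] at hk; omega)) (hf m (by omega)),
      ih (fun k hk => hf k (by omega))]

-- ascPochhammer eval as a product
lemma aux_poch (x : ℚ) (m : ℕ) :
    (ascPochhammer ℚ m).eval x = ∏ k ∈ Finset.range m, (x + k) := by
  induction m with
  | zero => simp
  | succ m ih => rw [ascPochhammer_succ_eval, Finset.prod_range_succ, ih]

lemma aux_hyp_prod (m : ℕ) :
    hypCoeff (1/6) (5/6) (1/5) m
      = ∏ k ∈ Finset.range m,
          ((1/6 + (k : ℚ)) * (5/6 + (k : ℚ)) / ((1/5 + (k : ℚ)) * ((k : ℚ) + 1))) := by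
  unfold hypCoeff
  rw [aux_poch, aux_poch, aux_poch, ← Finset.prod_range_add_one_eq_factorial]
  rw [Finset.prod_div_distrib, Finset.prod_mul_distrib, Finset.prod_mul_distrib]
  push_cast
  ring

lemma aux_term_val (p : ℕ) [Fact p.Prime] (hp7 : 7 ≤ p) (k : ℕ) :
    padicValRat p ((1/6 + (k : ℚ)) * (5/6 + (k : ℚ)) / ((1/5 + (k : ℚ)) * ((k : ℚ) + 1)))
      = (padicValNat p (1 + 6 * k) : ℤ) + (padicValNat p (5 + 6 * k) : ℤ)
        - (padicValNat p (1 + 5 * k) : ℤ) - (padicValNat p (1 + k) : ℤ) := by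
  have hp := (Fact.out : p.Prime)
  have h6 : ¬ p ∣ 6 := fun h => by have := Nat.le_of_dvd (by norm_num) h; omega
  have h5 : ¬ p ∣ 5 := fun h => by have := Nat.le_of_dvd (by norm_num) h; omega
  have h1' : ¬ p ∣ 1 := fun h => by have := Nat.le_of_dvd (by norm_num) h; omega
  have e1 : (1/6 + (k : ℚ)) = ((1 + 6 * k : ℕ) : ℚ) / ((6 : ℕ) : ℚ) := by push_cast; ring
  have e2 : (5/6 + (k : ℚ)) = ((5 + 6 * k : ℕ) : ℚ) / ((6 : ℕ) : ℚ) := by push_cast; ring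
  have e3 : (1/5 + (k : ℚ)) = ((1 + 5 * k : ℕ) : ℚ) / ((5 : ℕ) : ℚ) := by push_cast; ring
  have e4 : ((k : ℚ) + 1) = ((1 + k : ℕ) : ℚ) / ((1 : ℕ) : ℚ) := by push_cast; ring
  have n1 : (1/6 + (k : ℚ)) ≠ 0 := by positivity
  have n2 : (5/6 + (k : ℚ)) ≠ 0 := by positivity
  have n3 : (1/5 + (k : ℚ)) ≠ 0 := by positivity
  have n4 : ((k : ℚ) + 1) ≠ 0 := by positivity
  rw [padicValRat.div (mul_ne_zero n1 n2) (mul_ne_zero n3 n4),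
    padicValRat.mul n1 n2, padicValRat.mul n3 n4,
    e1, e2, e3, e4,
    aux_ratval p _ _ (by omega) (by norm_num) h6,
    aux_ratval p _ _ (by omega) (by norm_num) h6,
    aux_ratval p _ _ (by omega) (by norm_num) h5,
    aux_ratval p _ _ (by omega) (by norm_num) h1']
  ring


/-- For every prime `p ≥ 7`, the coefficients of `₂F₁(1/6, 5/6; 1/5; z)` are
`p`-integral. -/
theorem stmt_19 (p : ℕ) (hp : p.Prime) (hp7 : 7 ≤ p) :
    ∀ m : ℕ, 0 ≤ padicValRat p (hypCoeff (1 / 6) (5 / 6) (1 / 5) m) := by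
  haveI : Fact p.Prime := ⟨hp⟩
  intro m
  have hterm : ∀ k : ℕ,
      (1/6 + (k : ℚ)) * (5/6 + (k : ℚ)) / ((1/5 + (k : ℚ)) * ((k : ℚ) + 1)) ≠ 0 := by
    intro k; positivity
  rw [aux_hyp_prod, aux_prodval p _ m (fun k _ => hterm k),
    Finset.sum_congr rfl (fun k _ => aux_term_val p hp7 k)]
  have h6 : ¬ p ∣ 6 := fun h => by have := Nat.le_of_dvd (by norm_num) h; omega
  have h5 : ¬ p ∣ 5 := fun h => by have := Nat.le_of_dvd (by norm_num) h; omega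
  have key : ∑ k ∈ Finset.range m, (padicValNat p (1 + 5*k) + padicValNat p (1 + k))
      ≤ ∑ k ∈ Finset.range m, (padicValNat p (1 + 6*k) + padicValNat p (5 + 6*k)) := by
    set J := 6*m + 6 with hJ
    have hpJ : ∀ n : ℕ, n < J → n < p ^ J := by
      intro n hn
      calc n < J := hn
      _ < 2 ^ J := Nat.lt_two_pow_self
      _ ≤ p ^ J := Nat.pow_le_pow_left (by omega) J
    have rw1 : ∀ k ∈ Finset.range m,
        padicValNat p (1 + 6*k) + padicValNat p (5 + 6*k)
        = ∑ j ∈ Finset.Ico 1 J,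
            ((if p^j ∣ 1 + 6*k then 1 else 0) + (if p^j ∣ 5 + 6*k then 1 else 0)) := by
      intro k hk
      simp only [Finset.mem_range] at hk
      rw [aux_val_sum p (1 + 6*k) J hp (by omega) (hpJ _ (by omega)),
        aux_val_sum p (5 + 6*k) J hp (by omega) (hpJ _ (by omega)),
        ← Finset.sum_add_distrib]
    have rw2 : ∀ k ∈ Finset.range m,
        padicValNat p (1 + 5*k) + padicValNat p (1 + k)
        = ∑ j ∈ Finset.Ico 1 J,
            ((if p^j ∣ 1 + 5*k then 1 else 0) + (if p^j ∣ 1 + k then 1 else 0)) := by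
      intro k hk
      simp only [Finset.mem_range] at hk
      rw [aux_val_sum p (1 + 5*k) J hp (by omega) (hpJ _ (by omega)),
        aux_val_sum p (1 + k) J hp (by omega) (hpJ _ (by omega)),
        ← Finset.sum_add_distrib]
    rw [Finset.sum_congr rfl rw1, Finset.sum_congr rfl rw2]
    conv_lhs => rw [Finset.sum_comm]
    conv_rhs => rw [Finset.sum_comm]
    apply Finset.sum_le_sum
    intro j hj
    rw [Finset.sum_add_distrib, Finset.sum_add_distrib]
    have hj1 : 1 ≤ j := (Finset.mem_Ico.1 hj).1
    have hq7 : 7 ≤ p ^ j := le_trans hp7 (Nat.le_self_pow (by omega) p)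
    exact aux_key (p ^ j) m hq7
      ((hp.coprime_iff_not_dvd.2 h5).symm.pow_right j)
      ((hp.coprime_iff_not_dvd.2 h6).symm.pow_right j)
  have key' : ((∑ k ∈ Finset.range m, (padicValNat p (1 + 5*k) + padicValNat p (1 + k)) : ℕ) : ℤ)
      ≤ ((∑ k ∈ Finset.range m, (padicValNat p (1 + 6*k) + padicValNat p (5 + 6*k)) : ℕ) : ℤ) :=
    Nat.cast_le.2 key
  simp only [Nat.cast_sum, Nat.cast_add] at key'
  rw [Finset.sum_add_distrib, Finset.sum_add_distrib] at key'
  rw [Finset.sum_sub_distrib, Finset.sum_sub_distrib, Finset.sum_add_distrib]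
  omega
end
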